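/- arXiv:1803.05533 — 3 statements merged into one kernel-verified Lean document; each statement's English description precedes it below -/
import Mathlib

section
/- Given a finite family of intervals I_1, ..., I_d of real numbers (or of integers), there exists a subfamily of pairwise disjoint intervals (I_j)_{j∈J} such that the sum of the lengths of the intervals I_j for j ∈ J is at least half the length of the union of all the intervals I_1, ..., I_d. -/
open MeasureTheory

/-- Key combinatorial lemma: greedy chain selection. Given a finite family of intervals
`[s j, t j)` indexed by `F` and a barrier `r`, there are two subfamilies `A`, `B`, each
pairwise disjoint, covering the part of the union at or to the right of `r`, such that
all chosen intervals end strictly after `r`, and all intervals in `B` start at or after `r`. -/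
lemma key_chain (d : ℕ) (s t : Fin d → ℝ) :
    ∀ n (F : Finset (Fin d)), F.card ≤ n → ∀ r : ℝ,
    ∃ A B : Finset (Fin d), A ⊆ F ∧ B ⊆ F ∧
      (∀ i ∈ A, ∀ j ∈ A, i ≠ j → t i ≤ s j ∨ t j ≤ s i) ∧
      (∀ i ∈ B, ∀ j ∈ B, i ≠ j → t i ≤ s j ∨ t j ≤ s i) ∧
      (∀ i, (i ∈ A ∨ i ∈ B) → r < t i) ∧
      (∀ i ∈ B, r ≤ s i) ∧
      (∀ x : ℝ, r ≤ x → (∃ j ∈ F, s j ≤ x ∧ x < t j) →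
        ∃ j, (j ∈ A ∨ j ∈ B) ∧ s j ≤ x ∧ x < t j) := by
  intro n
  induction n with
  | zero =>
    intro F hF r
    have hFe : F = ∅ := Finset.card_eq_zero.mp (Nat.le_zero.mp hF)
    subst hFe
    exact ⟨∅, ∅, by simp, by simp, by simp, by simp, by simp, by simp,
      fun x _ hx => by simp at hx⟩
  | succ n ih =>
    intro F hF r
    classical
    set C : Finset (Fin d) := F.filter (fun j => max (s j) r < t j) with hC
    by_cases hCne : C.Nonempty
    · -- p : leftmost uncovered point ≥ r
      set p : ℝ := C.inf' hCne (fun j => max (s j) r) with hp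
      have hrp : r ≤ p := Finset.le_inf' hCne _ (fun j _ => le_max_right _ _)
      -- choose c containing p with maximal right endpoint
      set D : Finset (Fin d) := C.filter (fun j => max (s j) r = p) with hD
      have hDne : D.Nonempty := by
        obtain ⟨j, hj, hjp⟩ := Finset.exists_mem_eq_inf' hCne (fun j => max (s j) r)
        exact ⟨j, Finset.mem_filter.mpr ⟨hj, hjp.symm⟩⟩
      obtain ⟨c, hcD, hcmax⟩ := D.exists_max_image t hDne
      have hcC : c ∈ C := (Finset.mem_filter.mp hcD).1
      have hcF : c ∈ F := (Finset.mem_filter.mp hcC).1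
      have hcp : max (s c) r = p := (Finset.mem_filter.mp hcD).2
      have hscp : s c ≤ p := hcp ▸ le_max_left _ _
      have hptc : p < t c := hcp ▸ (Finset.mem_filter.mp hcC).2
      -- maximality over all intervals in F containing p
      have hM : ∀ j ∈ F, s j ≤ p → p < t j → t j ≤ t c := by
        intro j hjF hjs hjt
        have hjC : j ∈ C := Finset.mem_filter.mpr ⟨hjF, by
          have : max (s j) r ≤ p := max_le hjs hrp
          exact lt_of_le_of_lt this hjt⟩
        have h1 : p ≤ max (s j) r := Finset.inf'_le _ hjC
        have h2 : max (s j) r ≤ p := max_le hjs hrp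
        exact hcmax j (Finset.mem_filter.mpr ⟨hjC, le_antisymm h2 h1⟩)
      -- recurse
      have hcard : (F.erase c).card ≤ n := by
        have := Finset.card_erase_of_mem hcF
        omega
      obtain ⟨A₁, B₁, hA₁F, hB₁F, hA₁d, hB₁d, hAB₁t, hB₁s, hcov₁⟩ :=
        ih (F.erase c) hcard (t c)
      have hcB₁ : c ∉ B₁ := fun hc => (Finset.notMem_erase c F) (hB₁F hc)
      refine ⟨insert c B₁, A₁, ?_, hA₁F.trans (Finset.erase_subset _ _), ?_, hA₁d, ?_, ?_, ?_⟩
      · exact Finset.insert_subset hcF (hB₁F.trans (Finset.erase_subset _ _))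
      · -- disjointness of insert c B₁
        intro i hi j hj hij
        rcases Finset.mem_insert.mp hi with hic | hi
        · rcases Finset.mem_insert.mp hj with hjc | hj
          · exact absurd (hic.trans hjc.symm) hij
          · exact Or.inl (hic ▸ hB₁s j hj)
        · rcases Finset.mem_insert.mp hj with hjc | hj
          · exact Or.inr (hjc ▸ hB₁s i hi)
          · exact hB₁d i hi j hj hij
      · -- r < t i for all chosen
        intro i hi
        rcases hi with hi | hi
        · rcases Finset.mem_insert.mp hi with rfl | hi
          · exact lt_of_le_of_lt hrp hptc
          · exact lt_of_le_of_lt hrp (hptc.trans (hAB₁t i (Or.inr hi)))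
        · exact lt_of_le_of_lt hrp (hptc.trans (hAB₁t i (Or.inl hi)))
      · -- r ≤ s i for i ∈ A₁ : in fact p < s i
        intro i hiA
        by_contra hlt
        push_neg at hlt
        have hsi : s i ≤ p := le_of_lt (lt_of_lt_of_le hlt hrp)
        have hti : t c < t i := hAB₁t i (Or.inl hiA)
        have hiF : i ∈ F := Finset.mem_of_mem_erase (hA₁F hiA)
        have := hM i hiF hsi (hptc.trans hti)
        exact absurd hti (not_lt.mpr this)
      · -- coverage
        intro x hrx ⟨j, hjF, hjs, hjx⟩
        by_cases hxc : x < t c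
        · refine ⟨c, Or.inl (Finset.mem_insert_self _ _), ?_, hxc⟩
          have hjC : j ∈ C := Finset.mem_filter.mpr ⟨hjF, lt_of_le_of_lt (max_le hjs hrx) hjx⟩
          have hpj : p ≤ max (s j) r := Finset.inf'_le _ hjC
          exact hscp.trans (hpj.trans (max_le hjs hrx))
        · push_neg at hxc
          have hjc : j ≠ c := fun h => absurd hjx (not_lt.mpr (h ▸ hxc))
          obtain ⟨k, hk, hks, hkt⟩ := hcov₁ x hxc ⟨j, Finset.mem_erase.mpr ⟨hjc, hjF⟩, hjs, hjx⟩
          rcases hk with hk | hk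
          · exact ⟨k, Or.inr hk, hks, hkt⟩
          · exact ⟨k, Or.inl (Finset.mem_insert_of_mem hk), hks, hkt⟩
    · -- no candidates: nothing to cover
      refine ⟨∅, ∅, by simp, by simp, by simp, by simp, by simp, by simp, ?_⟩
      rintro x hrx ⟨j, hjF, hjs, hjx⟩
      exact absurd ⟨j, Finset.mem_filter.mpr ⟨hjF, lt_of_le_of_lt (max_le hjs hrx) hjx⟩⟩ hCne

/-- Given a finite family of (bounded, half-open) real intervals `[s j, t j)`, there is a
subfamily of pairwise disjoint intervals whose total length is at least half the measure
of the union of the family. -/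
theorem disjoint_subfamily_of_intervals
    (d : ℕ) (s t : Fin d → ℝ) (h : ∀ j, s j ≤ t j) :
    ∃ J : Finset (Fin d),
      (∀ i ∈ J, ∀ j ∈ J, i ≠ j →
        Disjoint (Set.Ico (s i) (t i)) (Set.Ico (s j) (t j))) ∧
      (volume (⋃ j : Fin d, Set.Ico (s j) (t j))).toReal / 2 ≤ ∑ j ∈ J, (t j - s j) := by
  classical
  rcases Nat.eq_zero_or_pos d with rfl | hd
  · refine ⟨∅, by simp, ?_⟩
    simp [Set.iUnion_of_empty]
  · have : Nonempty (Fin d) := ⟨⟨0, hd⟩⟩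
    set r : ℝ := Finset.univ.inf' Finset.univ_nonempty s with hr
    obtain ⟨A, B, _, _, hAd, hBd, _, _, hcov⟩ :=
      key_chain d s t (Finset.univ.card) Finset.univ le_rfl r
    -- union is covered by A ∪ B
    have hsub : (⋃ j : Fin d, Set.Ico (s j) (t j)) ⊆
        (⋃ j ∈ A, Set.Ico (s j) (t j)) ∪ (⋃ j ∈ B, Set.Ico (s j) (t j)) := by
      intro x hx
      obtain ⟨j, hj⟩ := Set.mem_iUnion.mp hx
      have hrx : r ≤ x := le_trans (Finset.inf'_le _ (Finset.mem_univ j)) hj.1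
      obtain ⟨k, hk, hks, hkt⟩ := hcov x hrx ⟨j, Finset.mem_univ j, hj.1, hj.2⟩
      rcases hk with hk | hk
      · exact Or.inl (Set.mem_biUnion hk ⟨hks, hkt⟩)
      · exact Or.inr (Set.mem_biUnion hk ⟨hks, hkt⟩)
    have hsum : ∀ S : Finset (Fin d),
        volume (⋃ j ∈ S, Set.Ico (s j) (t j)) ≤ ENNReal.ofReal (∑ j ∈ S, (t j - s j)) := by
      intro S
      calc volume (⋃ j ∈ S, Set.Ico (s j) (t j)) ≤ ∑ j ∈ S, volume (Set.Ico (s j) (t j)) :=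
            measure_biUnion_finset_le _ _
        _ = ∑ j ∈ S, ENNReal.ofReal (t j - s j) := by
            simp [Real.volume_Ico]
        _ = ENNReal.ofReal (∑ j ∈ S, (t j - s j)) :=
            (ENNReal.ofReal_sum_of_nonneg (fun j _ => sub_nonneg.mpr (h j))).symm
    have hsumA := hsum A
    have hsumB := hsum B
    have hle : volume (⋃ j : Fin d, Set.Ico (s j) (t j)) ≤
        ENNReal.ofReal (∑ j ∈ A, (t j - s j) + ∑ j ∈ B, (t j - s j)) := by
      calc volume (⋃ j : Fin d, Set.Ico (s j) (t j))
          ≤ volume ((⋃ j ∈ A, Set.Ico (s j) (t j)) ∪ (⋃ j ∈ B, Set.Ico (s j) (t j))) :=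
            measure_mono hsub
        _ ≤ volume (⋃ j ∈ A, Set.Ico (s j) (t j)) + volume (⋃ j ∈ B, Set.Ico (s j) (t j)) :=
            measure_union_le _ _
        _ ≤ ENNReal.ofReal (∑ j ∈ A, (t j - s j)) + ENNReal.ofReal (∑ j ∈ B, (t j - s j)) :=
            add_le_add hsumA hsumB
        _ = ENNReal.ofReal (∑ j ∈ A, (t j - s j) + ∑ j ∈ B, (t j - s j)) :=
            (ENNReal.ofReal_add (Finset.sum_nonneg fun j _ => sub_nonneg.mpr (h j))
              (Finset.sum_nonneg fun j _ => sub_nonneg.mpr (h j))).symm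
    have htoReal : (volume (⋃ j : Fin d, Set.Ico (s j) (t j))).toReal ≤
        ∑ j ∈ A, (t j - s j) + ∑ j ∈ B, (t j - s j) :=
      ENNReal.toReal_le_of_le_ofReal
        (add_nonneg (Finset.sum_nonneg fun j _ => sub_nonneg.mpr (h j))
          (Finset.sum_nonneg fun j _ => sub_nonneg.mpr (h j))) hle
    have hdisj : ∀ (S : Finset (Fin d)),
        (∀ i ∈ S, ∀ j ∈ S, i ≠ j → t i ≤ s j ∨ t j ≤ s i) →
        ∀ i ∈ S, ∀ j ∈ S, i ≠ j →
          Disjoint (Set.Ico (s i) (t i)) (Set.Ico (s j) (t j)) := by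
      intro S hS i hi j hj hij
      rw [Set.disjoint_left]
      rintro x ⟨hxi1, hxi2⟩ ⟨hxj1, hxj2⟩
      rcases hS i hi j hj hij with hle' | hle'
      · exact absurd (lt_of_lt_of_le hxi2 (hle'.trans hxj1)) (lt_irrefl x)
      · exact absurd (lt_of_lt_of_le hxj2 (hle'.trans hxi1)) (lt_irrefl x)
    rcases le_total (∑ j ∈ A, (t j - s j)) (∑ j ∈ B, (t j - s j)) with hAB | hAB
    · refine ⟨B, hdisj B hBd, ?_⟩
      nlinarith
    · refine ⟨A, hdisj A hAd, ?_⟩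
      nlinarith
end

section
/- Let f : ℕ → ℝ⁺ satisfy f(n+n') ≤ f(n)·f(n') for all n, n', and let E_0 = lim inf_{n→∞} (1/n) log f(n). Suppose n_0 is such that log f(n)/n < (1+δ/2)E_0 for all n ≥ n_0 (with δ > 0 fixed and n_0 ≥ 2/δ). Then for every integer n ≥ n_0 there exists n' ∈ [n, (1+δ)n] (integer) such that f(n'+j) ≥ exp(E_0·j/2)·f(n') for every positive integer j. -/
lemma log_f_mul_le (f : ℕ → ℝ) (hf : ∀ n, 0 < f n)
    (hsub : ∀ n n' : ℕ, f (n + n') ≤ f n * f n') (m : ℕ) :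
    ∀ k : ℕ, 1 ≤ k → Real.log (f (k * m)) ≤ k * Real.log (f m) := by
  intro k hk
  induction k with
  | zero => omega
  | succ k ih =>
    rcases Nat.eq_or_lt_of_le hk with h | h
    · have hk0 : k = 0 := by omega
      subst hk0
      norm_num
    · have hk1 : 1 ≤ k := by omega
      have h1 : f ((k + 1) * m) ≤ f (k * m) * f m := by
        have := hsub (k * m) m
        simpa [add_mul, one_mul] using this
      have h2 : Real.log (f ((k+1) * m)) ≤ Real.log (f (k*m)) + Real.log (f m) := by
        calc Real.log (f ((k+1) * m)) ≤ Real.log (f (k*m) * f m) :=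
              Real.log_le_log (hf _) h1
          _ = _ := Real.log_mul (ne_of_gt (hf _)) (ne_of_gt (hf _))
      have := ih hk1
      push_cast
      nlinarith [this]

lemma key_lower (f : ℕ → ℝ) (hf : ∀ n, 0 < f n)
    (hsub : ∀ n n' : ℕ, f (n + n') ≤ f n * f n')
    (E₀ : ℝ) (hE₀ : 0 < E₀)
    (hE₀def : E₀ = Filter.liminf (fun n : ℕ => Real.log (f n) / n) Filter.atTop)
    (m : ℕ) (hm : 1 ≤ m) : E₀ * m ≤ Real.log (f m) := by
  set g : ℕ → ℝ := fun n => Real.log (f n) / n with hg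
  by_cases hb : Filter.atTop.IsBoundedUnder (· ≥ ·) g
  · -- E₀ ≤ g m via frequently
    have hfreq : ∃ᶠ n in Filter.atTop, g n ≤ Real.log (f m) / m := by
      rw [Filter.frequently_atTop]
      intro a
      refine ⟨(a + 1) * m, ?_, ?_⟩
      · calc a ≤ a + 1 := by omega
          _ ≤ (a+1) * m := Nat.le_mul_of_pos_right _ (by omega)
      · have hlog := log_f_mul_le f hf hsub m (a+1) (by omega)
        have hpos : (0:ℝ) < ((a+1) * m : ℕ) := by positivity
        rw [hg]
        simp only
        rw [div_le_div_iff₀ hpos (by positivity)]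
        push_cast at hlog ⊢
        nlinarith
    have := Filter.liminf_le_of_frequently_le hfreq hb
    rw [← hE₀def] at this
    have hmpos : (0:ℝ) < m := by positivity
    calc E₀ * m ≤ (Real.log (f m) / m) * m := by
          apply mul_le_mul_of_nonneg_right this hmpos.le
      _ = Real.log (f m) := by field_simp
  · -- liminf is junk 0, contradicting E₀ > 0
    exfalso
    have : Filter.liminf g Filter.atTop = sSup ∅ := by
      rw [Filter.liminf_eq]
      congr
      ext a
      refine iff_false_intro ?_
      intro h
      exact hb ⟨a, h⟩
    rw [← hE₀def, Real.sSup_empty] at this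
    linarith

/-- For a submultiplicative positive function `f` with exponential growth rate `E₀ > 0`,
beyond a point `n₀` where `log f(n) / n < (1 + δ/2) E₀`, every `n ≥ n₀` admits a "steep
point" `n' ∈ [n, (1+δ)n]` from which `f` grows at exponential rate at least `E₀/2`. -/
theorem exists_steep_point
    (f : ℕ → ℝ) (hf : ∀ n, 0 < f n)
    (hsub : ∀ n n' : ℕ, f (n + n') ≤ f n * f n')
    (E₀ δ : ℝ) (hE₀ : 0 < E₀) (hδ : 0 < δ)
    (hE₀def : E₀ = Filter.liminf (fun n : ℕ => Real.log (f n) / n) Filter.atTop)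
    (n₀ : ℕ) (hn₀ : 2 / δ ≤ (n₀ : ℝ))
    (hmaj : ∀ n : ℕ, n₀ ≤ n → Real.log (f n) / n < (1 + δ / 2) * E₀) :
    ∀ n : ℕ, n₀ ≤ n → ∃ n' : ℕ, n ≤ n' ∧ (n' : ℝ) ≤ (1 + δ) * n ∧
      ∀ j : ℕ, 0 < j → Real.exp (E₀ * j / 2) * f n' ≤ f (n' + j) := by
  intro n hn
  by_contra hcon
  push_neg at hcon
  -- hcon : ∀ n', n ≤ n' → (n':ℝ) ≤ (1+δ)*n → ∃ j, 0 < j ∧ f (n'+j) < exp(E₀*j/2) * f n'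
  have hnpos : 0 < n := by
    have h0 : (0:ℝ) < 2 / δ := by positivity
    have : (0:ℝ) < (n:ℝ) := lt_of_lt_of_le h0 (le_trans hn₀ (by exact_mod_cast hn))
    exact_mod_cast this
  set N : ℕ := ⌈(1 + δ) * n⌉₊ with hN
  have hstep : ∀ k : ℕ, ∀ n' : ℕ, n ≤ n' → N + 1 ≤ n' + k →
      f n' ≤ Real.exp (E₀ * ((n' : ℝ) - n) / 2) * f n →
      ∃ m : ℕ, n ≤ m ∧ (1 + δ) * n < (m : ℝ) ∧
        f m ≤ Real.exp (E₀ * ((m : ℝ) - n) / 2) * f n := by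
    intro k
    induction k with
    | zero =>
      intro n' h1 h2 h3
      refine ⟨n', h1, ?_, h3⟩
      have : (N : ℝ) < n' := by exact_mod_cast (by omega : N < n')
      calc (1 + δ) * n ≤ (N : ℝ) := Nat.le_ceil _
        _ < n' := this
    | succ k ih =>
      intro n' h1 h2 h3
      by_cases hle : (n' : ℝ) ≤ (1 + δ) * n
      · obtain ⟨j, hj, hjlt⟩ := hcon n' h1 hle
        have hNn' : n' ≤ N := by
          calc n' = ⌈(n' : ℝ)⌉₊ := (Nat.ceil_natCast n').symm
            _ ≤ ⌈(1 + δ) * (n:ℝ)⌉₊ := Nat.ceil_mono hle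
        apply ih (n' + j) (by omega) (by omega)
        have : f (n' + j) < Real.exp (E₀ * j / 2) * (Real.exp (E₀ * ((n':ℝ) - n) / 2) * f n) := by
          calc f (n' + j) < Real.exp (E₀ * j / 2) * f n' := hjlt
            _ ≤ Real.exp (E₀ * j / 2) * (Real.exp (E₀ * ((n':ℝ) - n) / 2) * f n) := by
                apply mul_le_mul_of_nonneg_left h3 (Real.exp_pos _).le
        calc f (n' + j) ≤ Real.exp (E₀ * j / 2) * (Real.exp (E₀ * ((n':ℝ) - n) / 2) * f n) :=
              this.le
          _ = Real.exp (E₀ * (((n' + j : ℕ) : ℝ) - n) / 2) * f n := by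
              rw [← mul_assoc, ← Real.exp_add]
              push_cast
              ring_nf
      · push_neg at hle
        exact ⟨n', h1, hle, h3⟩
  obtain ⟨m, hm1, hm2, hm3⟩ := hstep (N + 1) n le_rfl (by omega)
    (by simp [Real.exp_zero, sub_self])
  -- Now derive contradiction
  have hm1' : 1 ≤ m := le_trans hnpos hm1
  have hlow : E₀ * m ≤ Real.log (f m) := key_lower f hf hsub E₀ hE₀ hE₀def m hm1'
  have hlogm : Real.log (f m) ≤ E₀ * ((m:ℝ) - n) / 2 + Real.log (f n) := by
    calc Real.log (f m) ≤ Real.log (Real.exp (E₀ * ((m:ℝ) - n) / 2) * f n) :=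
          Real.log_le_log (hf m) hm3
      _ = E₀ * ((m:ℝ) - n) / 2 + Real.log (f n) := by
          rw [Real.log_mul (Real.exp_ne_zero _) (ne_of_gt (hf n)), Real.log_exp]
  have hfn : Real.log (f n) < (1 + δ / 2) * E₀ * n := by
    have := hmaj n hn
    have hnr : (0:ℝ) < (n:ℝ) := by exact_mod_cast hnpos
    rw [div_lt_iff₀ hnr] at this
    linarith
  have hmn : (n:ℝ) ≤ m := by exact_mod_cast hm1
  nlinarith [hm2, hE₀]
end

section
/- For any x ∈ ℝ with x > 0: ∑_{j≥2} j·exp(−(j−1)x) = exp(−x)(2 − exp(−x))/(1 − exp(−x))², and the partial products ∏_{j=2}^{J} (1 − exp(−(j−1)x))^j are decreasing in J and bounded below by exp(−1/(1−exp(−x))³) > 0. -/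
open Real Finset

lemma aux_exp_le_one_sub (t : ℝ) (ht0 : 0 ≤ t) (ht1 : t < 1) :
    Real.exp (-(t / (1 - t))) ≤ 1 - t := by
  have h1t : 0 < 1 - t := by linarith
  have h : 1 / (1 - t) ≤ Real.exp (t / (1 - t)) := by
    have h2 := Real.add_one_le_exp (t / (1 - t))
    have h3 : 1 + t / (1 - t) = 1 / (1 - t) := by field_simp; ring
    linarith
  calc Real.exp (-(t / (1 - t))) = (Real.exp (t / (1 - t)))⁻¹ := by rw [Real.exp_neg]
    _ ≤ (1 / (1 - t))⁻¹ := by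
        apply inv_anti₀ (by positivity) h
    _ = 1 - t := by field_simp

/-- For `x > 0`: the series `∑_{j ≥ 2} j e^{-(j-1)x}` equals
`e^{-x}(2 - e^{-x})/(1 - e^{-x})²`, and the partial products
`∏_{j=2}^J (1 - e^{-(j-1)x})^j` are decreasing in `J` and bounded below by
`exp (-1/(1 - e^{-x})³)`. -/
theorem series_and_product_bounds (x : ℝ) (hx : 0 < x) :
    (∑' j : ℕ, ((j : ℝ) + 2) * Real.exp (-((j : ℝ) + 1) * x)) =
        Real.exp (-x) * (2 - Real.exp (-x)) / (1 - Real.exp (-x)) ^ 2 ∧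
    Antitone (fun J : ℕ => ∏ j ∈ Finset.Icc 2 J,
        (1 - Real.exp (-((j : ℝ) - 1) * x)) ^ j) ∧
    ∀ J : ℕ, Real.exp (-1 / (1 - Real.exp (-x)) ^ 3) ≤
      ∏ j ∈ Finset.Icc 2 J, (1 - Real.exp (-((j : ℝ) - 1) * x)) ^ j := by
  set r := Real.exp (-x) with hrdef
  have hr0 : 0 < r := Real.exp_pos _
  have hr1 : r < 1 := by
    rw [hrdef, Real.exp_lt_one_iff]; linarith
  have h1r : 0 < 1 - r := by linarith
  have hgeo : HasSum (fun n : ℕ => r ^ n) (1 / (1 - r)) := by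
    simpa [one_div] using hasSum_geometric_of_lt_one hr0.le hr1
  have hmul : HasSum (fun n : ℕ => (n : ℝ) * r ^ n) (r / (1 - r) ^ 2) :=
    hasSum_coe_mul_geometric_of_norm_lt_one (by rwa [Real.norm_eq_abs, abs_of_pos hr0])
  have hF : HasSum (fun k : ℕ => ((k : ℝ) + 1) * r ^ k) (1 / (1 - r) ^ 2) := by
    have h := hmul.add hgeo
    have heq : (fun n : ℕ => (n : ℝ) * r ^ n + r ^ n)
        = fun k : ℕ => ((k : ℝ) + 1) * r ^ k := by
      funext k; ring
    rw [heq] at h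
    convert h using 1
    field_simp
    ring
  -- part 1
  have hsum : HasSum (fun j : ℕ => ((j : ℝ) + 2) * Real.exp (-((j : ℝ) + 1) * x))
      (r * (2 - r) / (1 - r) ^ 2) := by
    have h := (hmul.mul_left r).add (hgeo.mul_left (2 * r))
    have heq : (fun n : ℕ => r * ((n : ℝ) * r ^ n) + 2 * r * r ^ n)
        = fun j : ℕ => ((j : ℝ) + 2) * Real.exp (-((j : ℝ) + 1) * x) := by
      funext j
      have hx1 : Real.exp (-((j : ℝ) + 1) * x) = r ^ (j + 1) := by
        rw [hrdef, ← Real.exp_nat_mul]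
        congr 1
        push_cast
        ring
      rw [hx1, pow_succ]; ring
    rw [heq] at h
    convert h using 1
    · rfl
    field_simp
    ring
  -- basic facts about factors
  have hfac : ∀ j : ℕ, 2 ≤ j → Real.exp (-((j : ℝ) - 1) * x) = r ^ (j - 1) := by
    intro j hj
    rw [hrdef, ← Real.exp_nat_mul]
    congr 1
    push_cast [Nat.cast_sub (show 1 ≤ j by omega)]
    ring
  have hpowlt : ∀ j : ℕ, 2 ≤ j → r ^ (j - 1) ≤ r := by
    intro j hj
    calc r ^ (j - 1) ≤ r ^ 1 := pow_le_pow_of_le_one hr0.le hr1.le (by omega)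
      _ = r := pow_one r
  have hfac01 : ∀ j : ℕ, 2 ≤ j → 0 ≤ (1 - Real.exp (-((j : ℝ) - 1) * x)) ^ j ∧
      (1 - Real.exp (-((j : ℝ) - 1) * x)) ^ j ≤ 1 := by
    intro j hj
    rw [hfac j hj]
    have h1 : r ^ (j - 1) ≤ r := hpowlt j hj
    constructor
    · exact pow_nonneg (by nlinarith) j
    · exact pow_le_one₀ (by nlinarith) (by nlinarith [pow_pos hr0 (j - 1)])
  refine ⟨hsum.tsum_eq, ?_, ?_⟩
  · -- Antitone
    apply antitone_nat_of_succ_le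
    intro n
    rcases Nat.lt_or_ge n 1 with h | h
    · interval_cases n
      simp
    · rw [Finset.prod_Icc_succ_top (by omega : 2 ≤ n + 1)]
      have hprod : 0 ≤ ∏ j ∈ Finset.Icc 2 n, (1 - Real.exp (-((j : ℝ) - 1) * x)) ^ j := by
        apply Finset.prod_nonneg
        intro j hj
        exact (hfac01 j (Finset.mem_Icc.mp hj).1).1
      have hle := (hfac01 (n + 1) (by omega)).2
      have hge := (hfac01 (n + 1) (by omega)).1
      push_cast at hle hge ⊢
      nlinarith
  · -- lower bound
    intro J
    have hfs : Summable (fun j : ℕ => (j : ℝ) * r ^ (j - 1)) := by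
      rw [← summable_nat_add_iff 1]
      have : (fun n : ℕ => ((n + 1 : ℕ) : ℝ) * r ^ ((n + 1) - 1))
          = fun k : ℕ => ((k : ℝ) + 1) * r ^ k := by
        funext n; push_cast; ring_nf
      rw [this]
      exact hF.summable
    have htsum : (∑' j : ℕ, (j : ℝ) * r ^ (j - 1)) = 1 / (1 - r) ^ 2 := by
      rw [Summable.tsum_eq_zero_add hfs]
      have : (fun n : ℕ => ((n + 1 : ℕ) : ℝ) * r ^ ((n + 1) - 1))
          = fun k : ℕ => ((k : ℝ) + 1) * r ^ k := by
        funext n; push_cast; ring_nf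
      simp only [this]
      rw [hF.tsum_eq]
      simp
    have hS : (∑ j ∈ Finset.Icc 2 J, (j : ℝ) * r ^ (j - 1)) ≤ 1 / (1 - r) ^ 2 := by
      refine le_trans (Summable.sum_le_tsum _ (fun i _ => by positivity) hfs) (le_of_eq htsum)
    have key : ∀ j ∈ Finset.Icc 2 J,
        Real.exp (-((j : ℝ) * r ^ (j - 1) / (1 - r))) ≤
          (1 - Real.exp (-((j : ℝ) - 1) * x)) ^ j := by
      intro j hj
      obtain ⟨hj2, _⟩ := Finset.mem_Icc.mp hj
      set t := r ^ (j - 1) with htdef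
      have ht0 : 0 < t := pow_pos hr0 _
      have htr : t ≤ r := hpowlt j hj2
      have ht1 : t < 1 := lt_of_le_of_lt htr hr1
      have h1t : 0 < 1 - t := by linarith
      rw [hfac j hj2]
      calc Real.exp (-((j : ℝ) * t / (1 - r)))
          ≤ Real.exp ((j : ℝ) * (-(t / (1 - t)))) := by
            apply Real.exp_le_exp.mpr
            have hdd : t / (1 - t) ≤ t / (1 - r) := by
              rw [div_le_div_iff₀ h1t h1r]
              nlinarith
            have hjn : (0 : ℝ) ≤ (j : ℝ) := Nat.cast_nonneg j
            rw [mul_neg, neg_le_neg_iff, mul_div_assoc]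
            exact mul_le_mul_of_nonneg_left hdd hjn
        _ = Real.exp (-(t / (1 - t))) ^ j := by
            rw [← Real.exp_nat_mul]
        _ ≤ (1 - t) ^ j :=
            pow_le_pow_left₀ (Real.exp_pos _).le (aux_exp_le_one_sub t ht0.le ht1) j
    calc Real.exp (-1 / (1 - r) ^ 3)
        ≤ Real.exp (∑ j ∈ Finset.Icc 2 J, -((j : ℝ) * r ^ (j - 1) / (1 - r))) := by
          apply Real.exp_le_exp.mpr
          have hsum_eq : (∑ j ∈ Finset.Icc 2 J, -((j : ℝ) * r ^ (j - 1) / (1 - r)))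
              = -(∑ j ∈ Finset.Icc 2 J, (j : ℝ) * r ^ (j - 1)) / (1 - r) := by
            simp [neg_div, Finset.sum_div, Finset.sum_neg_distrib]
          rw [hsum_eq]
          rw [div_le_div_iff₀ (by positivity) h1r]
          have h2 : (1 / (1 - r) ^ 2) * (1 - r) ^ 2 = 1 := by field_simp
          nlinarith [mul_le_mul_of_nonneg_right hS (sq_nonneg (1 - r)), h2,
            mul_pos h1r h1r, pow_pos h1r 3]
      _ = ∏ j ∈ Finset.Icc 2 J, Real.exp (-((j : ℝ) * r ^ (j - 1) / (1 - r))) :=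
          Real.exp_sum _ _
      _ ≤ ∏ j ∈ Finset.Icc 2 J, (1 - Real.exp (-((j : ℝ) - 1) * x)) ^ j :=
          Finset.prod_le_prod (fun j _ => (Real.exp_pos _).le) key
end
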